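/- Let a_1,…,a_n be distinct nonzero elements of a field. Define the double companion matrix C = (c_{l−1,k})_{1≤l≤n, k∈ℤ}, where for each k ∈ ℤ, ∑_{l=1}^n c_{l−1,k} x^{l−1} is the unique polynomial of degree < n taking value a_i^k at each a_i. Then c_{l−1,k} = 𝔊_{(0^{l−1}, k−l+1, 0^{n−l})}(A) for all l and all k ∈ ℤ. -/

import Mathlib

open Polynomial Finset Matrix

/-- The generalized bialternant `𝔊_c(A) = det(aₜ^{c_s+s−1}) / det(aₜ^{s−1})`. -/
noncomputable def genSchur {K : Type*} [Field K] {n : ℕ} (x : Fin n → K)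
    (c : Fin n → ℤ) : K :=
  (Matrix.of fun s t : Fin n => x t ^ (c s + (s : ℤ))).det /
    (Matrix.of fun s t : Fin n => x t ^ ((s : ℕ) : ℤ)).det

/-- The entries of the double companion matrix: the coefficient of `x^{l−1}` in
the degree `< n` polynomial taking value `aᵢᵏ` at each `aᵢ` is
`𝔊_{(0^{l−1}, k−l+1, 0^{n−l})}(A)`, for every `k ∈ ℤ`. -/
theorem double_companion_entries {K : Type*} [Field K] {n : ℕ}
    (a : Fin n → K) (ha : Function.Injective a) (h0 : ∀ i, a i ≠ 0) (k : ℤ)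
    (r : K[X]) (hdeg : r.degree < n) (hval : ∀ i, r.eval (a i) = a i ^ k) :
    ∀ l : Fin n, r.coeff l =
      genSchur a (fun s => if s = l then k - (l : ℤ) else 0) := by
  intro l
  have hn : 0 < n := l.pos
  set A : Matrix (Fin n) (Fin n) K := Matrix.vandermonde a with hA
  have hdetA : A.det ≠ 0 := by
    rw [Matrix.det_vandermonde]
    exact Finset.prod_ne_zero_iff.2 fun i _ => Finset.prod_ne_zero_iff.2
      fun j hj => sub_ne_zero.2 fun h => (Finset.mem_Ioi.1 hj).ne' (ha h)
  set c : Fin n → K := fun s => r.coeff s with hc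
  set b : Fin n → K := fun t => a t ^ k with hb
  have hnat : r.natDegree < n := by
    rcases eq_or_ne r 0 with h | h
    · simpa [h] using hn
    · exact (Polynomial.natDegree_lt_iff_degree_lt h).2 (by simpa using hdeg)
  have hmul : A *ᵥ c = b := by
    funext t
    have h1 : eval (a t) r = ∑ i ∈ Finset.range n, r.coeff i * a t ^ i :=
      Polynomial.eval_eq_sum_range' hnat (a t)
    simp only [Matrix.mulVec, dotProduct, hA, Matrix.vandermonde, hc, hb,
      Matrix.of_apply]
    rw [← hval t, h1, ← Fin.sum_univ_eq_sum_range (fun i => r.coeff i * a t ^ i)]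
    exact Finset.sum_congr rfl fun i _ => mul_comm _ _
  have hcram : Matrix.cramer A b = A.det • c := by
    rw [← hmul, Matrix.cramer_eq_adjugate_mulVec, Matrix.mulVec_mulVec,
      Matrix.adjugate_mul, Matrix.smul_mulVec, Matrix.one_mulVec]
  have hcl : r.coeff l = (A.updateCol l b).det / A.det := by
    have := congrFun hcram l
    rw [Matrix.cramer_apply] at this
    field_simp [this, hc, mul_comm]
    rw [this, Pi.smul_apply, smul_eq_mul, mul_comm]
  rw [hcl, genSchur]
  congr 1
  · rw [← Matrix.det_transpose (A.updateCol l b)]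
    congr 1
    funext s t
    rw [Matrix.transpose_apply, Matrix.updateCol_apply, Matrix.of_apply]
    by_cases hs : s = l
    · simp [hs, hb, sub_add_cancel]
    · simp [hs, hA, Matrix.vandermonde]
  · rw [← Matrix.det_transpose A]
    congr 1
    funext s t
    simp [hA, Matrix.vandermonde]
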